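/- Let λ ∈ ℝ and let ν be a symmetric 2×2 real matrix. For a symmetric positive definite 2×2 matrix G set J(G) := √(det G) · J₀ · G⁻¹ where J₀ = [[0,−1],[1,0]]. Then the derivative at t = 0 of the map t ↦ J₀ᵗ · J(e^{2λ}·I₂ + t·ν) equals −e^{−2λ}·ν⁰, where ν⁰ := ν − (tr ν / 2)·I₂ is the trace-free part of ν. -/

import Mathlib

open Matrix

/-- The standard rotation matrix `J₀ = [[0,−1],[1,0]]`. -/
def J0 : Matrix (Fin 2) (Fin 2) ℝ := !![0, -1; 1, 0]

/-- The matrix `J(G) = √(det G) · J₀ · G⁻¹` of the Hodge star operator of the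
metric `G` acting on `1`-forms. -/
noncomputable def hodgeJ (G : Matrix (Fin 2) (Fin 2) ℝ) : Matrix (Fin 2) (Fin 2) ℝ :=
  Real.sqrt G.det • (J0 * G⁻¹)

/-- The trace-free part `ν⁰ = ν − (tr ν / 2)·I₂` of a `2 × 2` matrix. -/
noncomputable def traceFree (ν : Matrix (Fin 2) (Fin 2) ℝ) : Matrix (Fin 2) (Fin 2) ℝ :=
  ν - (ν.trace / 2) • 1

lemma aux7 (a p q r s c w : ℝ) (ha : 0 < a) :
    HasDerivAt
      (fun t : ℝ => Real.sqrt ((a + t*p)*(a + t*q) - t*r*(t*s)) *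
        (((a + t*p)*(a + t*q) - t*r*(t*s))⁻¹ * (c + t*w)))
      (w/a - c*(p+q)/(2*a^2)) 0 := by
  have h1 : HasDerivAt (fun t : ℝ => a + t*p) p 0 := by
    simpa using ((hasDerivAt_id (0:ℝ)).mul_const p).const_add a
  have h2 : HasDerivAt (fun t : ℝ => a + t*q) q 0 := by
    simpa using ((hasDerivAt_id (0:ℝ)).mul_const q).const_add a
  have h3 : HasDerivAt (fun t : ℝ => t*r*(t*s)) 0 0 := by
    simpa [Pi.mul_def] using ((hasDerivAt_id (0:ℝ)).mul_const r).mul ((hasDerivAt_id (0:ℝ)).mul_const s)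
  have hd : HasDerivAt (fun t : ℝ => (a + t*p)*(a + t*q) - t*r*(t*s)) (a*(p+q)) 0 := by
    have := (h1.mul h2).sub h3
    simp only [Pi.mul_def, Pi.sub_def] at this
    refine this.congr_deriv ?_
    ring
  have hne : ((a + (0:ℝ)*p)*(a + (0:ℝ)*q) - (0:ℝ)*r*((0:ℝ)*s)) ≠ 0 := by
    norm_num; positivity
  have hsqrt : HasDerivAt (fun t : ℝ => Real.sqrt ((a + t*p)*(a + t*q) - t*r*(t*s)))
      (1 / (2 * Real.sqrt (a*a)) * (a*(p+q))) 0 := by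
    have := (Real.hasDerivAt_sqrt (by simpa using hne)).comp 0 hd
    simpa [Function.comp_def] using this
  have hinv : HasDerivAt (fun t : ℝ => ((a + t*p)*(a + t*q) - t*r*(t*s))⁻¹)
      (-(a*(p+q)) / ((a + (0:ℝ)*p)*(a + (0:ℝ)*q) - (0:ℝ)*r*((0:ℝ)*s))^2) 0 := hd.inv hne
  have he : HasDerivAt (fun t : ℝ => c + t*w) w 0 := by
    simpa using ((hasDerivAt_id (0:ℝ)).mul_const w).const_add c
  have := hsqrt.mul (hinv.mul he)
  simp only [Pi.mul_def] at this
  refine this.congr_deriv ?_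
  have hs : Real.sqrt (a*a) = a := Real.sqrt_mul_self ha.le
  simp only [hs]
  norm_num
  field_simp
  rw [Real.sqrt_sq ha.le]
  ring

lemma key7 (G : Matrix (Fin 2) (Fin 2) ℝ) :
    J0ᵀ * hodgeJ G = Real.sqrt G.det • ((G.det)⁻¹ • G.adjugate) := by
  have hJ : J0ᵀ * J0 = 1 := by
    have hT : J0ᵀ = !![0, 1; -1, 0] := by
      ext i j; fin_cases i <;> fin_cases j <;> rfl
    rw [hT, J0, Matrix.mul_fin_two, Matrix.one_fin_two]
    norm_num
  rw [hodgeJ, Matrix.mul_smul, ← Matrix.mul_assoc, hJ, Matrix.one_mul,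
    Matrix.inv_def, Ring.inverse_eq_inv']

/-- equation (II.19) of the paper. For `λ ∈ ℝ` and `ν` a symmetric
`2 × 2` real matrix, the map `t ↦ J₀ᵗ·J(e^{2λ}·I₂ + t·ν)` has derivative
`−e^{−2λ}·ν⁰` at `t = 0` (i.e. each entry of the matrix-valued map has the
corresponding entry of `−e^{−2λ}·ν⁰` as derivative at `0`). -/
theorem statement7 (l : ℝ) (ν : Matrix (Fin 2) (Fin 2) ℝ) (hν : ν.IsSymm) :
    ∀ i j : Fin 2,
      HasDerivAt
        (fun t : ℝ =>
          (J0ᵀ * hodgeJ (Real.exp (2 * l) • (1 : Matrix (Fin 2) (Fin 2) ℝ) + t • ν)) i j)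
        ((-(Real.exp (-(2 * l))) • traceFree ν) i j) 0 := by
  intro i j
  set a : ℝ := Real.exp (2 * l) with ha_def
  have ha : 0 < a := Real.exp_pos _
  have hdet : ∀ t : ℝ,
      (a • (1 : Matrix (Fin 2) (Fin 2) ℝ) + t • ν).det
        = (a + t * ν 0 0) * (a + t * ν 1 1) - t * ν 0 1 * (t * ν 1 0) := by
    intro t
    simp [Matrix.det_fin_two, Matrix.add_apply, Matrix.smul_apply, Matrix.one_apply]
    try ring
  have hentry : ∀ (t : ℝ) (i j : Fin 2),
      (a • (1 : Matrix (Fin 2) (Fin 2) ℝ) + t • ν) i j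
        = (if i = j then a else 0) + t * ν i j := by
    intro t i j
    by_cases h : i = j <;> simp [h, Matrix.add_apply, Matrix.smul_apply, Matrix.one_apply]
  have hadj : ∀ t : ℝ,
      (a • (1 : Matrix (Fin 2) (Fin 2) ℝ) + t • ν).adjugate
        = !![(a + t * ν 1 1), -(0 + t * ν 0 1); -(0 + t * ν 1 0), (a + t * ν 0 0)] := by
    intro t
    rw [Matrix.adjugate_fin_two]
    congr 1 <;> simp [hentry]
  have hexp : Real.exp (-(2 * l)) = a⁻¹ := by
    rw [ha_def, ← Real.exp_neg]
  have hfun : (fun t : ℝ =>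
      (J0ᵀ * hodgeJ (a • (1 : Matrix (Fin 2) (Fin 2) ℝ) + t • ν)) i j)
      = fun t : ℝ =>
        Real.sqrt ((a + t * ν 0 0) * (a + t * ν 1 1) - t * ν 0 1 * (t * ν 1 0)) *
          (((a + t * ν 0 0) * (a + t * ν 1 1) - t * ν 0 1 * (t * ν 1 0))⁻¹ *
            ((!![(a + t * ν 1 1), -(0 + t * ν 0 1); -(0 + t * ν 1 0), (a + t * ν 0 0)] :
              Matrix (Fin 2) (Fin 2) ℝ) i j)) := by
    funext t
    rw [key7, hdet, hadj, Matrix.smul_apply, Matrix.smul_apply, smul_eq_mul, smul_eq_mul]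
  rw [hfun]
  have htgt : ∀ i j : Fin 2, (-(Real.exp (-(2 * l))) • traceFree ν) i j
      = -(a⁻¹ * (ν i j - (if i = j then (ν 0 0 + ν 1 1) / 2 else 0))) := by
    intro i j
    by_cases h : i = j <;>
      simp [traceFree, hexp, Matrix.smul_apply, Matrix.sub_apply, Matrix.one_apply, h,
        Matrix.trace_fin_two] <;> ring
  rw [htgt]
  fin_cases i <;> fin_cases j <;>
    [ (convert aux7 a (ν 0 0) (ν 1 1) (ν 0 1) (ν 1 0) a (ν 1 1) ha using 1);
      (convert aux7 a (ν 0 0) (ν 1 1) (ν 0 1) (ν 1 0) 0 (-(ν 0 1)) ha using 1);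
      (convert aux7 a (ν 0 0) (ν 1 1) (ν 0 1) (ν 1 0) 0 (-(ν 1 0)) ha using 1);
      (convert aux7 a (ν 0 0) (ν 1 1) (ν 0 1) (ν 1 0) a (ν 0 0) ha using 1)] <;>
    (try simp) <;> (try field_simp) <;> (try ring)
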